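/- Let τ, R > 0, set r = ⌈(R/τ + 3)/2⌉ − 1, and let g, h : ℝ → ℂ be bounded measurable functions with g(t) = 0 for |t| > τ/2 and h(t) = 0 for |t| ≥ R/2. Let x̃(t) = Σ_{l=1}^L a_l h(t − t_l) be a finite stream of pulses with t_l ∈ [0,τ) and a_l ∈ ℂ, let x(t) = Σ_{m∈ℤ} x̃(t − mτ) be its τ-periodic continuation, and define g_r(t) = Σ_{m=−r}^{r} g(t + mτ). Then for every sampling instant θ ∈ [0,τ): ∫_ℝ conj(g_r(t − θ)) x̃(t) dt = ∫_ℝ conj(g(t − θ)) x(t) dt. That is, filtering the finite stream with g_r* (−t) and sampling in [0,τ) produces exactly the samples obtained in the periodic setting with kernel g*(−t). -/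

import Mathlib

open MeasureTheory

/-- Filtering the finite stream `x̃(t) = ∑_l a_l h(t − t_l)` with the extended kernel
`g_r(t) = ∑_{m=−r}^r g(t + mτ)` and sampling at `θ ∈ [0,τ)` gives exactly the sample
obtained in the periodic setting, i.e. filtering the τ-periodic continuation of `x̃`
with the kernel `g`. Here `r = ⌈(R/τ + 3)/2⌉ − 1`, `g` is supported in `[−τ/2,τ/2]`
and `h` in `(−R/2, R/2)`, both bounded and measurable. -/
theorem finite_stream_samples_equal_periodic_samples
    (τ R : ℝ) (hτ : 0 < τ) (hR : 0 < R)
    (r : ℤ) (hr : r = ⌈(R / τ + 3) / 2⌉ - 1)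
    (g h : ℝ → ℂ) (hgm : Measurable g) (hhm : Measurable h)
    (Cg Ch : ℝ) (hgb : ∀ u : ℝ, ‖g u‖ ≤ Cg) (hhb : ∀ u : ℝ, ‖h u‖ ≤ Ch)
    (hgs : ∀ u : ℝ, τ / 2 < |u| → g u = 0)
    (hhs : ∀ u : ℝ, R / 2 ≤ |u| → h u = 0)
    (L : ℕ) (t : Fin L → ℝ) (a : Fin L → ℂ)
    (ht : ∀ l, t l ∈ Set.Ico 0 τ)
    (θ : ℝ) (hθ : θ ∈ Set.Ico 0 τ) :
    (∫ u : ℝ,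
        (starRingEnd ℂ) (∑ m ∈ Finset.Icc (-r) r, g (u - θ + m * τ)) *
          ∑ l, a l * h (u - t l)) =
    (∫ u : ℝ,
        (starRingEnd ℂ) (g (u - θ)) *
          ∑' m : ℤ, ∑ l, a l * h (u - t l - m * τ)) := by
  have hCh : 0 ≤ Ch := le_trans (norm_nonneg _) (hhb 0)
  have hCg : 0 ≤ Cg := le_trans (norm_nonneg _) (hgb 0)
  set M : ℝ := ∑ l, ‖a l‖ * Ch with hM
  have hM0 : 0 ≤ M := Finset.sum_nonneg fun l _ => mul_nonneg (norm_nonneg _) hCh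
  -- integrability of the generic integrand
  have key : ∀ c d : ℝ, Integrable (fun u : ℝ =>
      (starRingEnd ℂ) (g (u - c)) * ∑ l, a l * h (u - t l - d)) := by
    intro c d
    have hmeas : Measurable (fun u : ℝ =>
        (starRingEnd ℂ) (g (u - c)) * ∑ l, a l * h (u - t l - d)) := by
      apply Measurable.mul
      · exact RCLike.continuous_conj.measurable.comp (hgm.comp (measurable_id.sub measurable_const))
      · exact Finset.measurable_sum _ fun l _ =>
          measurable_const.mul
            (hhm.comp ((measurable_id.sub measurable_const).sub measurable_const))
    have hdom : Integrable ((Metric.closedBall c (τ / 2)).indicator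
        (fun _ : ℝ => Cg * M)) := by
      apply IntegrableOn.integrable_indicator _ measurableSet_closedBall
      exact integrableOn_const measure_closedBall_lt_top.ne
    refine hdom.mono' hmeas.aestronglyMeasurable
      (Filter.Eventually.of_forall fun u => ?_)
    by_cases hu : u ∈ Metric.closedBall c (τ / 2)
    · rw [Set.indicator_of_mem hu]
      have h1 : ‖(starRingEnd ℂ) (g (u - c))‖ = ‖g (u - c)‖ := norm_star _
      rw [norm_mul, h1]
      have h2 : ‖∑ l, a l * h (u - t l - d)‖ ≤ M := by
        refine le_trans (norm_sum_le _ _) (Finset.sum_le_sum fun l _ => ?_)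
        rw [norm_mul]
        exact mul_le_mul_of_nonneg_left (hhb _) (norm_nonneg _)
      exact mul_le_mul (hgb _) h2 (norm_nonneg _) hCg
    · rw [Set.indicator_of_notMem hu]
      have hgz : g (u - c) = 0 := by
        apply hgs
        simpa [Metric.mem_closedBall, Real.dist_eq, not_le] using hu
      simp [hgz]
  -- support estimate: outside Icc (-r) r the pulses vanish on the support of g(·-θ)
  have hsupp : ∀ u : ℝ, |u - θ| ≤ τ / 2 → ∀ m : ℤ, m ∉ Finset.Icc (-r) r →
      (∑ l, a l * h (u - t l - (m : ℝ) * τ)) = 0 := by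
    intro u hu m hm
    refine Finset.sum_eq_zero fun l _ => ?_
    rw [hhs (u - t l - (m : ℝ) * τ) ?_, mul_zero]
    have hceil : (R / τ + 3) / 2 ≤ ((r : ℝ) + 1) := by
      rw [hr]
      push_cast
      linarith [Int.le_ceil ((R / τ + 3) / 2)]
    have hm' : r + 1 ≤ m ∨ m ≤ -(r + 1) := by
      simp only [Finset.mem_Icc, not_and_or, not_le] at hm
      omega
    have hmabs : ((r : ℝ) + 1) ≤ |(m : ℝ)| := by
      rcases hm' with hm' | hm'
      · have : ((r : ℝ) + 1) ≤ (m : ℝ) := by exact_mod_cast hm'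
        exact le_trans this (le_abs_self _)
      · have : (m : ℝ) ≤ -((r : ℝ) + 1) := by exact_mod_cast hm'
        calc ((r : ℝ) + 1) ≤ -(m : ℝ) := by linarith
          _ ≤ |(m : ℝ)| := neg_le_abs _
    have htl : |θ - t l| ≤ τ := by
      rcases ht l with ⟨h1, h2⟩
      rcases hθ with ⟨h3, h4⟩
      rw [abs_le]; constructor <;> linarith
    have h2 : |u - t l| ≤ τ / 2 + τ := by
      calc |u - t l| = |(u - θ) + (θ - t l)| := by ring_nf
        _ ≤ |u - θ| + |θ - t l| := abs_add_le _ _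
        _ ≤ τ / 2 + τ := add_le_add hu htl
    have h3 : |(m : ℝ)| * τ ≤ |u - t l| + |u - t l - (m : ℝ) * τ| := by
      calc |(m : ℝ)| * τ = |(m : ℝ) * τ| := by
            rw [abs_mul, abs_of_pos hτ]
        _ = |(u - t l) - (u - t l - (m : ℝ) * τ)| := by ring_nf
        _ ≤ |u - t l| + |u - t l - (m : ℝ) * τ| := abs_sub _ _
    have h4 : ((r : ℝ) + 1) * τ ≤ |(m : ℝ)| * τ :=
      mul_le_mul_of_nonneg_right hmabs hτ.le
    have h5 : (R / τ + 3) / 2 * τ ≤ ((r : ℝ) + 1) * τ :=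
      mul_le_mul_of_nonneg_right hceil hτ.le
    have h6 : (R / τ + 3) / 2 * τ = R / 2 + 3 * τ / 2 := by
      field_simp <;> ring
    linarith
  -- pointwise identity for the periodic side
  have hpt : ∀ u : ℝ,
      (starRingEnd ℂ) (g (u - θ)) * ∑' m : ℤ, ∑ l, a l * h (u - t l - (m : ℝ) * τ)
      = ∑ m ∈ Finset.Icc (-r) r,
          (starRingEnd ℂ) (g (u - θ)) * ∑ l, a l * h (u - t l - (m : ℝ) * τ) := by
    intro u
    by_cases hg0 : g (u - θ) = 0
    · simp [hg0]
    · have hu : |u - θ| ≤ τ / 2 := by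
        by_contra hcon
        exact hg0 (hgs _ (lt_of_not_ge hcon))
      rw [← Finset.mul_sum, tsum_eq_sum (fun m hm => hsupp u hu m hm)]
  -- shift each term of the finite side
  have shift : ∀ m : ℤ,
      (∫ u : ℝ, (starRingEnd ℂ) (g (u - (θ - (m : ℝ) * τ))) *
          ∑ l, a l * h (u - t l - 0)) =
      ∫ u : ℝ, (starRingEnd ℂ) (g (u - θ)) *
          ∑ l, a l * h (u - t l - (m : ℝ) * τ) := by
    intro m
    have := integral_add_right_eq_self
      (μ := (volume : Measure ℝ))
      (fun v : ℝ => (starRingEnd ℂ) (g (v - θ)) *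
        ∑ l, a l * h (v - t l - (m : ℝ) * τ)) ((m : ℝ) * τ)
    rw [← this]
    congr 1
    funext u
    have e1 : u - (θ - (m : ℝ) * τ) = u + (m : ℝ) * τ - θ := by ring
    rw [e1]
    congr 1
    refine Finset.sum_congr rfl fun l _ => ?_
    congr 1
    ring
  -- put the finite side in summed form
  have hL : ∀ u : ℝ,
      (starRingEnd ℂ) (∑ m ∈ Finset.Icc (-r) r, g (u - θ + (m : ℝ) * τ)) *
          ∑ l, a l * h (u - t l)
      = ∑ m ∈ Finset.Icc (-r) r,
          (starRingEnd ℂ) (g (u - (θ - (m : ℝ) * τ))) *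
            ∑ l, a l * h (u - t l - 0) := by
    intro u
    rw [map_sum, Finset.sum_mul]
    refine Finset.sum_congr rfl fun m _ => ?_
    have e1 : u - θ + (m : ℝ) * τ = u - (θ - (m : ℝ) * τ) := by ring
    rw [e1]
    congr 1
    refine Finset.sum_congr rfl fun l _ => ?_
    rw [sub_zero]
  calc (∫ u : ℝ,
        (starRingEnd ℂ) (∑ m ∈ Finset.Icc (-r) r, g (u - θ + (m : ℝ) * τ)) *
          ∑ l, a l * h (u - t l))
      = ∫ u : ℝ, ∑ m ∈ Finset.Icc (-r) r,
          (starRingEnd ℂ) (g (u - (θ - (m : ℝ) * τ))) *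
            ∑ l, a l * h (u - t l - 0) := by
        congr 1; funext u; exact hL u
    _ = ∑ m ∈ Finset.Icc (-r) r, ∫ u : ℝ,
          (starRingEnd ℂ) (g (u - (θ - (m : ℝ) * τ))) *
            ∑ l, a l * h (u - t l - 0) :=
        integral_finset_sum _ (fun m _ => key (θ - (m : ℝ) * τ) 0)
    _ = ∑ m ∈ Finset.Icc (-r) r, ∫ u : ℝ,
          (starRingEnd ℂ) (g (u - θ)) *
            ∑ l, a l * h (u - t l - (m : ℝ) * τ) :=
        Finset.sum_congr rfl fun m _ => shift m
    _ = ∫ u : ℝ, ∑ m ∈ Finset.Icc (-r) r,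
          (starRingEnd ℂ) (g (u - θ)) *
            ∑ l, a l * h (u - t l - (m : ℝ) * τ) :=
        (integral_finset_sum
          (f := fun (m : ℤ) (u : ℝ) => (starRingEnd ℂ) (g (u - θ)) *
            ∑ l, a l * h (u - t l - (m : ℝ) * τ))
          (Finset.Icc (-r) r) (fun m _ => key θ ((m : ℝ) * τ))).symm
    _ = ∫ u : ℝ, (starRingEnd ℂ) (g (u - θ)) *
            ∑' m : ℤ, ∑ l, a l * h (u - t l - (m : ℝ) * τ) := by
        congr 1; funext u; exact (hpt u).symm
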